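/- Let J be a finite index set, let d ≥ 1, let r = (r_j)_{j∈J} be nonnegative radii, and let τ be a binary hierarchy over J. Then the stratum S(τ) has nonempty interior in (ℝᵈ)^J; that is, there exists a nonempty open subset of (ℝᵈ)^J contained in S(τ). -/

import Mathlib

open Finset

/-- A binary hierarchy over a finite index set `J`, encoded by its cluster set:
a laminar family of nonempty subsets of `J` containing the root `J` and all
singletons, in which every nonsingleton member is the disjoint union of exactly
two members (its children). -/
structure BinaryHierarchy (J : Type*) [DecidableEq J] [Fintype J] where
  clusters : Finset (Finset J)
  root_mem : (Finset.univ : Finset J) ∈ clusters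
  singleton_mem : ∀ j : J, ({j} : Finset J) ∈ clusters
  nonempty_of_mem : ∀ I ∈ clusters, I.Nonempty
  laminar : ∀ I ∈ clusters, ∀ K ∈ clusters, I ⊆ K ∨ K ⊆ I ∨ Disjoint I K
  binary_split : ∀ I ∈ clusters, 1 < I.card →
    ∃ L ∈ clusters, ∃ R ∈ clusters, Disjoint L R ∧ L ∪ R = I

variable {J : Type*} [DecidableEq J] [Fintype J]

/-- The parent of a cluster `I`: the smallest member of the (laminar) family strictly
containing `I`, realized as the intersection of all members strictly containing `I`
(these form a chain in a laminar family). -/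
def BinaryHierarchy.parent (τ : BinaryHierarchy J) (I : Finset J) : Finset J :=
  (τ.clusters.filter fun K => I ⊂ K).inf id

/-- The sibling (local complement) of a cluster `I`. -/
def BinaryHierarchy.sibling (τ : BinaryHierarchy J) (I : Finset J) : Finset J :=
  τ.parent I \ I

open scoped RealInnerProductSpace

/-- Centroid of the partial configuration `x|A`. -/
noncomputable def centroid {E : Type*} [NormedAddCommGroup E] [NormedSpace ℝ E]
    (x : J → E) (A : Finset J) : E :=
  (A.card : ℝ)⁻¹ • ∑ a ∈ A, x a

/-- The configuration space of labelled, noncolliding disks with radii `r` in `ℝ^d`. -/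
def Conf (d : ℕ) (J : Type*) (r : J → ℝ) : Set (J → EuclideanSpace ℝ (Fin d)) :=
  {x | ∀ i j : J, i ≠ j → r i + r j < ‖x i - x j‖}

/-- `s_I(x)`: difference of the centroids of the cluster `I` and its sibling. -/
noncomputable def sepVec (τ : BinaryHierarchy J) {d : ℕ}
    (x : J → EuclideanSpace ℝ (Fin d)) (I : Finset J) : EuclideanSpace ℝ (Fin d) :=
  centroid x I - centroid x (τ.sibling I)

/-- `m_I(x)`: midpoint of the centroids of the cluster `I` and its sibling. -/
noncomputable def midpt (τ : BinaryHierarchy J) {d : ℕ}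
    (x : J → EuclideanSpace ℝ (Fin d)) (I : Finset J) : EuclideanSpace ℝ (Fin d) :=
  (2 : ℝ)⁻¹ • (centroid x I + centroid x (τ.sibling I))

/-- `σ_{i,I,τ}(x)`: signed distance of agent `i` to the separating hyperplane of `I`
and its sibling. -/
noncomputable def separation (τ : BinaryHierarchy J) {d : ℕ}
    (x : J → EuclideanSpace ℝ (Fin d)) (I : Finset J) (i : J) : ℝ :=
  ⟪x i - midpt τ x I, ‖sepVec τ x I‖⁻¹ • sepVec τ x I⟫

/-- The stratum of configurations supporting the binary hierarchy `τ`. -/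
def stratum (d : ℕ) (r : J → ℝ) (τ : BinaryHierarchy J) :
    Set (J → EuclideanSpace ℝ (Fin d)) :=
  {x | x ∈ Conf d J r ∧ ∀ I ∈ τ.clusters, I ≠ Finset.univ →
      sepVec τ x I ≠ 0 ∧ ∀ i ∈ I, 0 ≤ separation τ x I i}


set_option linter.unusedSectionVars false

namespace StratumAux

variable {J : Type*} [DecidableEq J] [Fintype J]

noncomputable def mean (f : J → ℝ) (A : Finset J) : ℝ := (A.card : ℝ)⁻¹ * ∑ a ∈ A, f a

lemma le_mean {f : J → ℝ} {A : Finset J} (hA : A.Nonempty) {m : ℝ}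
    (h : ∀ a ∈ A, m ≤ f a) : m ≤ mean f A := by
  have hc : (0:ℝ) < (A.card : ℝ) := by exact_mod_cast (Finset.card_pos.2 hA)
  have hs : (A.card : ℝ) * m ≤ ∑ a ∈ A, f a := by
    have := Finset.card_nsmul_le_sum A f m h
    simpa [nsmul_eq_mul] using this
  rw [mean]
  calc m = (A.card : ℝ)⁻¹ * ((A.card : ℝ) * m) := by field_simp
    _ ≤ (A.card : ℝ)⁻¹ * ∑ a ∈ A, f a := by
        exact mul_le_mul_of_nonneg_left hs (inv_nonneg.2 hc.le)

lemma mean_le {f : J → ℝ} {A : Finset J} (hA : A.Nonempty) {m : ℝ}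
    (h : ∀ a ∈ A, f a ≤ m) : mean f A ≤ m := by
  have hc : (0:ℝ) < (A.card : ℝ) := by exact_mod_cast (Finset.card_pos.2 hA)
  have hs : ∑ a ∈ A, f a ≤ (A.card : ℝ) * m := by
    have := Finset.sum_le_card_nsmul A f m h
    simpa [nsmul_eq_mul] using this
  rw [mean]
  calc (A.card : ℝ)⁻¹ * ∑ a ∈ A, f a ≤ (A.card : ℝ)⁻¹ * ((A.card : ℝ) * m) :=
        mul_le_mul_of_nonneg_left hs (inv_nonneg.2 hc.le)
    _ = m := by field_simp

lemma mean_mul (M : ℝ) (f : J → ℝ) (A : Finset J) :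
    mean (fun j => M * f j) A = M * mean f A := by
  rw [mean, mean, ← Finset.mul_sum]; ring

/-- `L` lies strictly above `B` on the line, with gap larger than both diameters. -/
def Above (f : J → ℝ) (L B : Finset J) : Prop :=
  ∃ a₁ b₁ a₂ b₂ : ℝ, (∀ i ∈ L, f i ∈ Set.Icc a₁ b₁) ∧ (∀ j ∈ B, f j ∈ Set.Icc a₂ b₂) ∧
    b₂ < a₁ ∧ b₁ - a₁ < a₁ - b₂ ∧ b₂ - a₂ < a₁ - b₂

def GapCond (f : J → ℝ) (L B : Finset J) : Prop := Above f L B ∨ Above f B L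

lemma Above.congr {f g : J → ℝ} {L B : Finset J} (h : Above f L B)
    (hL : ∀ i ∈ L, g i = f i) (hB : ∀ j ∈ B, g j = f j) : Above g L B := by
  obtain ⟨a₁, b₁, a₂, b₂, h1, h2, h3, h4, h5⟩ := h
  exact ⟨a₁, b₁, a₂, b₂, fun i hi => (hL i hi) ▸ h1 i hi,
    fun j hj => (hB j hj) ▸ h2 j hj, h3, h4, h5⟩

lemma GapCond.congr {f g : J → ℝ} {L B : Finset J} (h : GapCond f L B)
    (hL : ∀ i ∈ L, g i = f i) (hB : ∀ j ∈ B, g j = f j) : GapCond g L B := by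
  rcases h with h | h
  · exact Or.inl (h.congr hL hB)
  · exact Or.inr (h.congr hB hL)

lemma above_key {f : J → ℝ} {L B : Finset J} (h : Above f L B)
    (hL : L.Nonempty) (hB : B.Nonempty) :
    mean f B < mean f L ∧ (∀ i ∈ L, (mean f L + mean f B) / 2 < f i) ∧
      (∀ j ∈ B, f j < (mean f L + mean f B) / 2) := by
  obtain ⟨a₁, b₁, a₂, b₂, hLb, hBb, h1, h2, h3⟩ := h
  have hmL1 : a₁ ≤ mean f L := le_mean hL fun a ha => (hLb a ha).1
  have hmL2 : mean f L ≤ b₁ := mean_le hL fun a ha => (hLb a ha).2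
  have hmB1 : a₂ ≤ mean f B := le_mean hB fun a ha => (hBb a ha).1
  have hmB2 : mean f B ≤ b₂ := mean_le hB fun a ha => (hBb a ha).2
  refine ⟨by linarith, fun i hi => ?_, fun j hj => ?_⟩
  · have := (hLb i hi).1; linarith
  · have := (hBb j hj).2; linarith



lemma no_between (τ : BinaryHierarchy J) {S L R : Finset J} (hS : S ∈ τ.clusters)
    (hL : L ∈ τ.clusters) (hR : R ∈ τ.clusters) (hd : Disjoint L R) (hu : L ∪ R = S)
    (hLne : L.Nonempty) :
    ∀ K ∈ τ.clusters, L ⊂ K → S ⊆ K := by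
  intro K hK hLK
  obtain ⟨y, hy⟩ := hLne
  rcases τ.laminar K hK S hS with h | h | h
  · -- K ⊆ S
    obtain ⟨x, hxK, hxL⟩ := Finset.exists_of_ssubset hLK
    have hxR : x ∈ R := by
      have hxS : x ∈ S := h hxK
      rw [← hu] at hxS
      rcases Finset.mem_union.1 hxS with h' | h'
      · exact absurd h' hxL
      · exact h'
    rcases τ.laminar K hK R hR with h2 | h2 | h2
    · exact absurd (h2 (hLK.1 hy)) (Finset.disjoint_left.1 hd hy)
    · rw [← hu]; exact Finset.union_subset hLK.1 h2
    · exact absurd hxR (Finset.disjoint_left.1 h2 hxK)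
  · exact h
  · have hyS : y ∈ S := by rw [← hu]; exact Finset.mem_union_left _ hy
    exact absurd hyS (Finset.disjoint_left.1 h (hLK.1 hy))

lemma parent_eq (τ : BinaryHierarchy J) {I S : Finset J} (hS : S ∈ τ.clusters)
    (hIS : I ⊂ S) (hmin : ∀ K ∈ τ.clusters, I ⊂ K → S ⊆ K) : τ.parent I = S := by
  refine le_antisymm (Finset.inf_le ?_) (Finset.le_inf fun K hK => ?_)
  · exact Finset.mem_filter.2 ⟨hS, hIS⟩
  · obtain ⟨hK1, hK2⟩ := Finset.mem_filter.1 hK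
    exact hmin K hK1 hK2

lemma sibling_eq (τ : BinaryHierarchy J) {S L R : Finset J} (hS : S ∈ τ.clusters)
    (hL : L ∈ τ.clusters) (hR : R ∈ τ.clusters) (hd : Disjoint L R) (hu : L ∪ R = S)
    (hLne : L.Nonempty) (hRne : R.Nonempty) : τ.sibling L = R := by
  have hLS : L ⊂ S := by
    rw [← hu]
    refine (Finset.ssubset_iff_of_subset Finset.subset_union_left).2 ?_
    obtain ⟨y, hy⟩ := hRne
    exact ⟨y, Finset.mem_union_right _ hy, Finset.disjoint_right.1 hd hy⟩
  have hp : τ.parent L = S := parent_eq τ hS hLS (no_between τ hS hL hR hd hu hLne)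
  rw [BinaryHierarchy.sibling, hp, ← hu, Finset.union_sdiff_cancel_left hd]

lemma sibling_subset (τ : BinaryHierarchy J) {I L : Finset J} (hL : L ∈ τ.clusters)
    (hIL : I ⊂ L) : τ.sibling I ⊆ L := by
  refine Finset.sdiff_subset.trans ?_
  have : (τ.clusters.filter fun K => I ⊂ K).inf id ≤ id L :=
    Finset.inf_le (Finset.mem_filter.2 ⟨hL, hIL⟩)
  exact this

lemma exists_f (τ : BinaryHierarchy J) :
    ∀ (n : ℕ) (S : Finset J), S.card ≤ n → S ∈ τ.clusters →
    ∀ a b : ℝ, a < b → ∃ f : J → ℝ,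
      (∀ j ∈ S, f j ∈ Set.Icc a b) ∧
      (∀ i ∈ S, ∀ j ∈ S, i ≠ j → f i ≠ f j) ∧
      (∀ I ∈ τ.clusters, I ⊂ S → (τ.sibling I).Nonempty ∧ GapCond f I (τ.sibling I)) := by
  intro n
  induction n with
  | zero =>
    intro S hcard hS a b _
    obtain ⟨y, hy⟩ := τ.nonempty_of_mem S hS
    rw [Finset.card_eq_zero.1 (Nat.le_zero.1 hcard)] at hy
    exact absurd hy (Finset.notMem_empty y)
  | succ n ih =>
    intro S hcard hS a b hab
    by_cases h1 : S.card ≤ 1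
    · refine ⟨fun _ => a, fun j _ => ⟨le_refl a, hab.le⟩, ?_, ?_⟩
      · intro i hi j hj hij
        exact absurd (Finset.card_le_one.1 h1 i hi j hj) hij
      · intro I hI hIS
        have h2 := Finset.card_lt_card hIS
        have h3 := Finset.card_pos.2 (τ.nonempty_of_mem I hI)
        omega
    · push_neg at h1
      obtain ⟨L, hL, R, hR, hdis, huni⟩ := τ.binary_split S hS h1
      have hLne := τ.nonempty_of_mem L hL
      have hRne := τ.nonempty_of_mem R hR
      have hLS : L ⊂ S := by
        rw [← huni]
        refine (Finset.ssubset_iff_of_subset Finset.subset_union_left).2 ?_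
        obtain ⟨y, hy⟩ := hRne
        exact ⟨y, Finset.mem_union_right _ hy, Finset.disjoint_right.1 hdis hy⟩
      have hRS : R ⊂ S := by
        rw [← huni]
        refine (Finset.ssubset_iff_of_subset Finset.subset_union_right).2 ?_
        obtain ⟨y, hy⟩ := hLne
        exact ⟨y, Finset.mem_union_left _ hy, Finset.disjoint_left.1 hdis hy⟩
      have hLc : L.card ≤ n := by have := Finset.card_lt_card hLS; omega
      have hRc : R.card ≤ n := by have := Finset.card_lt_card hRS; omega
      set ℓ : ℝ := b - a with hldef
      have hl : 0 < ℓ := sub_pos.2 hab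
      obtain ⟨f₁, hf₁Icc, hf₁inj, hf₁gap⟩ := ih L hLc hL a (a + ℓ/5) (by linarith)
      obtain ⟨f₂, hf₂Icc, hf₂inj, hf₂gap⟩ := ih R hRc hR (b - ℓ/5) b (by linarith)
      classical
      set f : J → ℝ := fun j => if j ∈ L then f₁ j else f₂ j with hfdef
      have hfL : ∀ j ∈ L, f j = f₁ j := fun j hj => if_pos hj
      have hfR : ∀ j ∈ R, f j = f₂ j := fun j hj => if_neg (Finset.disjoint_right.1 hdis hj)
      have hbL : ∀ j ∈ L, f j ∈ Set.Icc a (a + ℓ/5) := fun j hj => (hfL j hj) ▸ hf₁Icc j hj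
      have hbR : ∀ j ∈ R, f j ∈ Set.Icc (b - ℓ/5) b := fun j hj => (hfR j hj) ▸ hf₂Icc j hj
      refine ⟨f, ?_, ?_, ?_⟩
      · intro j hj
        rw [← huni] at hj
        rcases Finset.mem_union.1 hj with h | h
        · exact ⟨(hbL j h).1, by have := (hbL j h).2; linarith⟩
        · exact ⟨by have := (hbR j h).1; linarith, (hbR j h).2⟩
      · intro i hi j hj hij
        rw [← huni] at hi hj
        rcases Finset.mem_union.1 hi with hi' | hi' <;> rcases Finset.mem_union.1 hj with hj' | hj'
        · rw [hfL i hi', hfL j hj']; exact hf₁inj i hi' j hj' hij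
        · have u1 := (hbL i hi').2; have u2 := (hbR j hj').1
          exact ne_of_lt (by linarith)
        · have u1 := (hbR i hi').1; have u2 := (hbL j hj').2
          exact ne_of_gt (by linarith)
        · rw [hfR i hi', hfR j hj']; exact hf₂inj i hi' j hj' hij
      · intro I hI hIS
        have hsub : I ⊆ L ∨ I ⊆ R := by
          rcases τ.laminar I hI L hL with h | h | h
          · exact Or.inl h
          · by_cases hIL : I = L
            · exact Or.inl (le_of_eq hIL)
            · have hLI : L ⊂ I := Finset.ssubset_iff_subset_ne.2 ⟨h, fun hc => hIL hc.symm⟩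
              have := no_between τ hS hL hR hdis huni hLne I hI hLI
              exact absurd this (Finset.ssubset_def.1 hIS).2
          · refine Or.inr fun x hx => ?_
            have hxS := hIS.1 hx
            rw [← huni] at hxS
            rcases Finset.mem_union.1 hxS with h' | h'
            · exact absurd h' (Finset.disjoint_left.1 h hx)
            · exact h'
        have hAbove : Above f R L :=
          ⟨b - ℓ/5, b, a, a + ℓ/5, hbR, hbL, by linarith, by linarith, by linarith⟩
        rcases hsub with hIL | hIR
        · by_cases hEq : I = L
          · subst hEq
            rw [sibling_eq τ hS hL hR hdis huni hLne hRne]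
            exact ⟨hRne, Or.inr hAbove⟩
          · have hIL' : I ⊂ L := Finset.ssubset_iff_subset_ne.2 ⟨hIL, hEq⟩
            obtain ⟨hsne, hgap⟩ := hf₁gap I hI hIL'
            have hsibL : τ.sibling I ⊆ L := sibling_subset τ hL hIL'
            exact ⟨hsne, hgap.congr (fun i hi => hfL i (hIL hi)) (fun j hj => hfL j (hsibL hj))⟩
        · by_cases hEq : I = R
          · subst hEq
            rw [sibling_eq τ hS hR hL hdis.symm (by rw [Finset.union_comm]; exact huni) hRne hLne]
            exact ⟨hLne, Or.inl hAbove⟩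
          · have hIR' : I ⊂ R := Finset.ssubset_iff_subset_ne.2 ⟨hIR, hEq⟩
            obtain ⟨hsne, hgap⟩ := hf₂gap I hI hIR'
            have hsibR : τ.sibling I ⊆ R := sibling_subset τ hR hIR'
            exact ⟨hsne, hgap.congr (fun i hi => hfR i (hIR hi)) (fun j hj => hfR j (hsibR hj))⟩

lemma centroid_line {d : ℕ} (e : EuclideanSpace ℝ (Fin d)) (c : J → ℝ) (A : Finset J) :
    centroid (fun j => c j • e) A = mean c A • e := by
  rw [_root_.centroid, mean, ← Finset.sum_smul, smul_smul]

lemma continuous_centroid {d : ℕ} (A : Finset J) :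
    Continuous fun x : J → EuclideanSpace ℝ (Fin d) => centroid x A := by
  unfold _root_.centroid
  exact (continuous_finset_sum A fun a _ =>
    (continuous_apply a : Continuous fun x : J → EuclideanSpace ℝ (Fin d) => x a)).const_smul ((A.card : ℝ)⁻¹)

lemma continuous_sepVec (τ : BinaryHierarchy J) {d : ℕ} (I : Finset J) :
    Continuous fun x : J → EuclideanSpace ℝ (Fin d) => sepVec τ x I :=
  (continuous_centroid I).sub (continuous_centroid _)

lemma continuous_midpt (τ : BinaryHierarchy J) {d : ℕ} (I : Finset J) :
    Continuous fun x : J → EuclideanSpace ℝ (Fin d) => midpt τ x I :=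
  ((continuous_centroid (d := d) I).add (continuous_centroid (τ.sibling I))).const_smul (2⁻¹ : ℝ)

end StratumAux
open StratumAux in
/-- the stratum has nonempty interior in `(ℝ^d)^J`. -/
theorem stratum_interior_nonempty (d : ℕ) (hd : 1 ≤ d) (r : J → ℝ) (hr : ∀ j, 0 ≤ r j)
    (τ : BinaryHierarchy J) :
    ∃ U : Set (J → EuclideanSpace ℝ (Fin d)), IsOpen U ∧ U.Nonempty ∧
      U ⊆ stratum d r τ := by
  classical
  obtain ⟨f, -, hinj, hgap⟩ :=
    exists_f τ (Finset.univ : Finset J).card Finset.univ le_rfl τ.root_mem 0 1 one_pos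
  have hinj' : ∀ i j : J, i ≠ j → f i ≠ f j := fun i j hij =>
    hinj i (Finset.mem_univ i) j (Finset.mem_univ j) hij
  set C : ℝ := ∑ p ∈ (Finset.univ : Finset (J × J)),
      max 0 ((r p.1 + r p.2) / |f p.1 - f p.2|) with hCdef
  have hC0 : 0 ≤ C := Finset.sum_nonneg fun p _ => le_max_left 0 _
  set M : ℝ := C + 1 with hMdef
  have hM0 : 0 < M := by linarith
  have hMkey : ∀ i j : J, i ≠ j → r i + r j < M * |f i - f j| := by
    intro i j hij
    have hD : 0 < |f i - f j| := abs_pos.2 (sub_ne_zero.2 (hinj' i j hij))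
    have h1 : (r i + r j) / |f i - f j| ≤ C :=
      le_trans (le_max_right 0 _)
        (Finset.single_le_sum (f := fun p : J × J => max (0:ℝ) ((r p.1 + r p.2) / |f p.1 - f p.2|))
          (fun p _ => le_max_left 0 _) (Finset.mem_univ (i, j)))
    have h2 : (r i + r j) / |f i - f j| < M := by linarith
    exact (div_lt_iff₀ hD).1 h2
  set e : EuclideanSpace ℝ (Fin d) := EuclideanSpace.single (⟨0, hd⟩ : Fin d) 1 with hedef
  have henorm : ‖e‖ = 1 := by rw [hedef, EuclideanSpace.norm_single]; norm_num
  have hee : ⟪e, e⟫ = 1 := by rw [real_inner_self_eq_norm_sq, henorm]; norm_num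
  have hene : e ≠ 0 := by
    intro h; rw [h, norm_zero] at henorm; norm_num at henorm
  set x : J → EuclideanSpace ℝ (Fin d) := fun j => (M * f j) • e with hxdef
  have hxi : ∀ i, x i = (M * f i) • e := fun i => by rw [hxdef]
  -- scalar key facts for each non-root cluster
  have hKey : ∀ I ∈ τ.clusters, I ≠ Finset.univ →
      mean f I ≠ mean f (τ.sibling I) ∧
      ∀ i ∈ I, 0 < (f i - (mean f I + mean f (τ.sibling I)) / 2) *
        (mean f I - mean f (τ.sibling I)) := by
    intro I hI hIu
    have hIss : I ⊂ Finset.univ := Finset.ssubset_univ_iff.2 hIu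
    obtain ⟨hsne, hgc⟩ := hgap I hI hIss
    have hIne := τ.nonempty_of_mem I hI
    rcases hgc with h | h
    · obtain ⟨h1, h2, -⟩ := above_key h hIne hsne
      refine ⟨ne_of_gt h1, fun i hi => ?_⟩
      have := h2 i hi
      have hpos1 : 0 < f i - (mean f I + mean f (τ.sibling I)) / 2 := by linarith
      exact mul_pos hpos1 (by linarith)
    · obtain ⟨h1, -, h3⟩ := above_key h hsne hIne
      refine ⟨ne_of_lt h1, fun i hi => ?_⟩
      have := h3 i hi
      have hneg1 : f i - (mean f I + mean f (τ.sibling I)) / 2 < 0 := by linarith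
      exact mul_pos_of_neg_of_neg hneg1 (by linarith)
  -- geometric computations for the configuration x
  have hcent : ∀ A : Finset J, centroid x A = (M * mean f A) • e := by
    intro A; rw [hxdef, centroid_line, mean_mul]
  have hsep : ∀ I : Finset J,
      sepVec τ x I = (M * (mean f I - mean f (τ.sibling I))) • e := by
    intro I; rw [sepVec, hcent, hcent, ← sub_smul, mul_sub]
  have hmid : ∀ I : Finset J, midpt τ x I =
      (2⁻¹ * (M * mean f I + M * mean f (τ.sibling I))) • e := by
    intro I; rw [midpt, hcent, hcent, ← add_smul, smul_smul]
  have hdiff : ∀ (i : J) (I : Finset J), x i - midpt τ x I =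
      (M * f i - 2⁻¹ * (M * mean f I + M * mean f (τ.sibling I))) • e := by
    intro i I; rw [hxi, hmid, ← sub_smul]
  have hinner : ∀ (i : J) (I : Finset J), ⟪x i - midpt τ x I, sepVec τ x I⟫ =
      M ^ 2 * ((f i - (mean f I + mean f (τ.sibling I)) / 2) *
        (mean f I - mean f (τ.sibling I))) := by
    intro i I
    rw [hdiff, hsep, real_inner_smul_left, real_inner_smul_right, hee]
    ring
  -- the open set
  refine ⟨(⋂ (i : J) (j : J) (_ : i ≠ j), {y | r i + r j < ‖y i - y j‖}) ∩
    ⋂ (I : Finset J) (_ : I ∈ τ.clusters) (_ : I ≠ Finset.univ),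
      ({y | sepVec τ y I ≠ 0} ∩
        ⋂ (i : J) (_ : i ∈ I), {y | 0 < ⟪y i - midpt τ y I, sepVec τ y I⟫}),
    ?_, ?_, ?_⟩
  · refine IsOpen.inter ?_ ?_
    · exact isOpen_iInter_of_finite fun i => isOpen_iInter_of_finite fun j =>
        isOpen_iInter_of_finite fun _ => isOpen_lt continuous_const
          (((continuous_apply i).sub (continuous_apply j)).norm)
    · refine isOpen_iInter_of_finite fun I => isOpen_iInter_of_finite fun _ =>
        isOpen_iInter_of_finite fun _ => IsOpen.inter ?_ ?_
      · exact isOpen_ne_fun (continuous_sepVec τ I) continuous_const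
      · exact isOpen_iInter_of_finite fun i => isOpen_iInter_of_finite fun _ =>
          isOpen_lt continuous_const
            (Continuous.inner ((continuous_apply i).sub (continuous_midpt τ I))
              (continuous_sepVec τ I))
  · refine ⟨x, Set.mem_inter ?_ ?_⟩
    · simp only [Set.mem_iInter, Set.mem_setOf_eq]
      intro i j hij
      have : x i - x j = (M * f i - M * f j) • e := by rw [hxi, hxi, ← sub_smul]
      rw [this, norm_smul, henorm, mul_one, Real.norm_eq_abs, ← mul_sub, abs_mul,
        abs_of_pos hM0]
      exact hMkey i j hij
    · simp only [Set.mem_iInter, Set.mem_inter_iff, Set.mem_setOf_eq]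
      intro I hI hIu
      obtain ⟨hne, hpos⟩ := hKey I hI hIu
      constructor
      · rw [hsep]
        exact smul_ne_zero (mul_ne_zero hM0.ne' (sub_ne_zero.2 hne)) hene
      · intro i hi
        rw [hinner]
        exact mul_pos (pow_pos hM0 2) (hpos i hi)
  · intro y hy
    obtain ⟨hy1, hy2⟩ := hy
    simp only [Set.mem_iInter, Set.mem_setOf_eq] at hy1
    simp only [Set.mem_iInter, Set.mem_inter_iff, Set.mem_setOf_eq] at hy2
    refine ⟨fun i j hij => hy1 i j hij, fun I hI hIu => ?_⟩
    obtain ⟨h1, h2⟩ := hy2 I hI hIu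
    refine ⟨h1, fun i hi => ?_⟩
    rw [separation, real_inner_smul_right]
    exact mul_nonneg (inv_nonneg.2 (norm_nonneg _)) (h2 i hi).le
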